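/- Fix K ≥ 1 and u_1,…,u_K ∈ ℝ, and set U_1 = Σ_{k=1}^K u_k and U_3 = Σ_{k=1}^K u_k³. Define g(τ) = (1/K)Σ_{k=1}^K Λ(τ u_k) − Λ(τ U_1 / K) for τ ∈ ℝ. Then, as τ → 0, g(τ) + (τ³/(48K))·(U_3 − U_1³/K²) = O(τ⁵); that is, the function τ ↦ g(τ) + (τ³/(48K))(U_3 − U_1³/K²) is big-O of τ⁵ at τ = 0. -/

import Mathlib

open Real Asymptotics Filter

/-- The logistic function `Λ(z) = 1/(1+e^{−z})`. -/
noncomputable def logistic (z : ℝ) : ℝ := 1 / (1 + Real.exp (-z))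

noncomputable def P (z : ℝ) : ℝ := 1/2 + z/4 - z^3/48

noncomputable def E (z : ℝ) : ℝ := 1 - z + z^2/2 - z^3/6 + z^4/24

lemma exp_taylor : (fun z : ℝ => Real.exp (-z) - E z) =O[nhds 0] fun z : ℝ => z ^ 5 := by
  rw [isBigO_iff]
  refine ⟨1, ?_⟩
  have h : ∀ᶠ z : ℝ in nhds 0, |z| ≤ 1 := by
    have := Metric.eventually_nhds_iff.mpr (⟨1, one_pos, fun {y} hy => le_of_lt (by simpa using hy)⟩ :
      ∃ ε > 0, ∀ ⦃y : ℝ⦄, dist y 0 < ε → |y| ≤ 1)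
    exact this
  filter_upwards [h] with z hz
  have hz' : |(-z)| ≤ 1 := by rwa [abs_neg]
  have := Real.exp_bound hz' (n := 5) (by norm_num)
  have hsum : ∑ m ∈ Finset.range 5, (-z) ^ m / (m.factorial : ℝ) = E z := by
    simp [Finset.sum_range_succ, E, Nat.factorial]
    ring
  rw [hsum] at this
  calc ‖Real.exp (-z) - E z‖ ≤ |(-z)| ^ 5 * (6 / (120 * 5)) := by
        simpa [Nat.factorial] using this
    _ ≤ 1 * ‖z ^ 5‖ := by
        rw [abs_neg]
        have : |z| ^ 5 = ‖z ^ 5‖ := by rw [← abs_pow]; rfl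
        rw [this]
        nlinarith [norm_nonneg (z^5)]


lemma logi_taylor : (fun z : ℝ => logistic z - P z) =O[nhds 0] fun z : ℝ => z ^ 5 := by
  have hden : ∀ z : ℝ, (1:ℝ) ≤ 1 + Real.exp (-z) := fun z => by
    nlinarith [Real.exp_pos (-z)]
  -- F z = 1 - (1+exp(-z)) * P z
  have hF : (fun z : ℝ => 1 - (1 + Real.exp (-z)) * P z) =O[nhds 0] fun z : ℝ => z ^ 5 := by
    have hid : ∀ z : ℝ, 1 - (1 + Real.exp (-z)) * P z
        = -((Real.exp (-z) - E z) * P z) + (-(z^6)/288 + z^7/1152) := by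
      intro z; simp only [E, P]; ring
    have h1 : (fun z : ℝ => -((Real.exp (-z) - E z) * P z)) =O[nhds 0] fun z : ℝ => z ^ 5 := by
      have hP : (fun z : ℝ => P z) =O[nhds 0] (fun _ : ℝ => (1:ℝ)) := by
        apply Filter.Tendsto.isBigO_one
        have : Continuous P := by unfold P; continuity
        simpa using this.tendsto 0
      have := (exp_taylor.mul hP).neg_left
      simpa using this
    have h2 : (fun z : ℝ => -(z^6)/288 + z^7/1152) =O[nhds 0] fun z : ℝ => z ^ 5 := by
      have hz : (fun z : ℝ => z) =O[nhds 0] (fun _ : ℝ => (1:ℝ)) :=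
        Filter.Tendsto.isBigO_one _ (by exact tendsto_id)
      have h6 : (fun z : ℝ => z^6) =O[nhds 0] fun z : ℝ => z ^ 5 := by
        have := (isBigO_refl (fun z : ℝ => z^5) (nhds 0)).mul hz
        simpa [pow_succ] using this
      have h7 : (fun z : ℝ => z^7) =O[nhds 0] fun z : ℝ => z ^ 5 := by
        have := h6.mul hz
        simpa [pow_succ, mul_assoc] using this
      have := ((h6.neg_left.const_mul_left (1/288)).add (h7.const_mul_left (1/1152)))
      simpa [neg_div, div_eq_inv_mul, mul_comm] using this
    calc (fun z : ℝ => 1 - (1 + Real.exp (-z)) * P z)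
        = fun z : ℝ => -((Real.exp (-z) - E z) * P z) + (-(z^6)/288 + z^7/1152) :=
          funext hid
      _ =O[nhds 0] fun z : ℝ => z ^ 5 := h1.add h2
  refine IsBigO.trans ?_ hF
  rw [isBigO_iff]
  refine ⟨1, Filter.Eventually.of_forall fun z => ?_⟩
  have hpos : (0:ℝ) < 1 + Real.exp (-z) := lt_of_lt_of_le one_pos (hden z)
  have : logistic z - P z = (1 - (1 + Real.exp (-z)) * P z) / (1 + Real.exp (-z)) := by
    rw [logistic]; field_simp
  rw [this, one_mul, norm_div]
  have h1 : ‖(1 + Real.exp (-z))‖ ≥ 1 := by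
    rw [Real.norm_eq_abs, abs_of_pos hpos]; exact hden z
  calc ‖1 - (1 + Real.exp (-z)) * P z‖ / ‖1 + Real.exp (-z)‖
      ≤ ‖1 - (1 + Real.exp (-z)) * P z‖ / 1 := by
        apply div_le_div_of_nonneg_left (norm_nonneg _) one_pos h1
    _ = ‖1 - (1 + Real.exp (-z)) * P z‖ := div_one _

/-- Jensen-gap expansion. With `U₁ = Σ u_k`, `U₃ = Σ u_k³` and
`g(τ) = (1/K)Σ_k Λ(τu_k) − Λ(τU₁/K)`, one has
`g(τ) + (τ³/(48K))(U₃ − U₁³/K²) = O(τ⁵)` as `τ → 0`. -/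

lemma logi_taylor_comp (c : ℝ) :
    (fun τ : ℝ => logistic (τ * c) - P (τ * c)) =O[nhds 0] fun τ : ℝ => τ ^ 5 := by
  have ht : Filter.Tendsto (fun τ : ℝ => τ * c) (nhds 0) (nhds 0) := by
    have : Continuous (fun τ : ℝ => τ * c) := continuous_id.mul continuous_const
    simpa using this.tendsto (0:ℝ)
  have h := logi_taylor.comp_tendsto ht
  refine IsBigO.trans h ?_
  have he : ((fun z : ℝ => z ^ 5) ∘ fun τ : ℝ => τ * c) = fun τ : ℝ => c ^ 5 * τ ^ 5 := by
    funext τ; simp [Function.comp]; ring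
  rw [he]
  exact isBigO_const_mul_self _ _ _

theorem jensen_gap_expansion
    (K : ℕ) (hK : 1 ≤ K) (u : Fin K → ℝ)
    (U₁ U₃ : ℝ) (hU₁ : U₁ = ∑ k, u k) (hU₃ : U₃ = ∑ k, (u k) ^ 3)
    (g : ℝ → ℝ)
    (hg : ∀ τ : ℝ, g τ = (1 / K) * (∑ k, logistic (τ * u k)) - logistic (τ * U₁ / K)) :
    (fun τ : ℝ => g τ + (τ ^ 3 / (48 * K)) * (U₃ - U₁ ^ 3 / (K : ℝ) ^ 2))
      =O[nhds 0] (fun τ : ℝ => τ ^ 5) := by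
  have hK0 : (K : ℝ) ≠ 0 := by positivity
  have heq : (fun τ : ℝ => g τ + (τ ^ 3 / (48 * K)) * (U₃ - U₁ ^ 3 / (K : ℝ) ^ 2))
      = fun τ : ℝ => (1 / K) * (∑ k, (logistic (τ * u k) - P (τ * u k)))
          - (logistic (τ * (U₁ / K)) - P (τ * (U₁ / K))) := by
    funext τ
    rw [hg, hU₁, hU₃]
    have h1 : ∑ k, (logistic (τ * u k) - P (τ * u k))
        = (∑ k, logistic (τ * u k)) - ∑ k, P (τ * u k) := Finset.sum_sub_distrib _ _
    rw [h1]
    have h2 : ∑ k, P (τ * u k)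
        = (K : ℝ) * (1/2) + (τ/4) * (∑ k, u k) - (τ^3/48) * (∑ k, (u k)^3) := by
      simp only [P]
      rw [Finset.sum_sub_distrib, Finset.sum_add_distrib, Finset.sum_const,
        Finset.card_univ, Fintype.card_fin, nsmul_eq_mul]
      congr 1
      · congr 1
        rw [Finset.mul_sum]
        exact Finset.sum_congr rfl fun k _ => by ring
      · rw [Finset.mul_sum]
        exact Finset.sum_congr rfl fun k _ => by ring
    rw [h2, show (τ * ∑ k, u k) / (K:ℝ) = τ * ((∑ k, u k) / K) from by ring]
    simp only [P]
    field_simp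
    ring
  rw [heq]
  have hsum : (fun τ : ℝ => ∑ k, (logistic (τ * u k) - P (τ * u k)))
      =O[nhds 0] fun τ : ℝ => τ ^ 5 := by
    have := Asymptotics.IsBigO.sum (s := Finset.univ) fun k _ => logi_taylor_comp (u k)
    refine this.congr_left fun τ => ?_
    simp [Finset.sum_apply]
  exact (hsum.const_mul_left _).sub (logi_taylor_comp (U₁ / K))
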